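/- arXiv:1808.03876 — 2 statements merged into one kernel-verified Lean document; each statement's English description precedes it below -/
import Mathlib

section
/- A Poisson mixture of a normally distributed rate has a log-concave pmf: if M has density proportional to exp(-(m-k₁)²/(2k₂)) restricted to m ≥ 0, and conditionally on M = m, Y ~ Poisson(m), then the marginal pmf p_Y[k] = ∫₀^∞ e^{-m} m^k/k! · f_M(m) dm is a log-concave sequence in k, i.e., p_Y[k]² ≥ p_Y[k-1]·p_Y[k+1] for all k ≥ 1. -/
open MeasureTheory Real Filter Set


noncomputable def gmpG (k₁ k₂ : ℝ) (m : ℝ) : ℝ :=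
  Real.exp (-m - (m - k₁) ^ 2 / (2 * k₂))

noncomputable def gmpA (k₁ k₂ : ℝ) (n : ℕ) : ℝ :=
  ∫ m in Set.Ioi (0:ℝ), m ^ n * gmpG k₁ k₂ m

lemma gmpG_pos (k₁ k₂ m : ℝ) : 0 < gmpG k₁ k₂ m := Real.exp_pos _

lemma gmp_integrable (k₁ k₂ : ℝ) (hk₂ : 0 < k₂) (n : ℕ) :
    IntegrableOn (fun m : ℝ => m ^ n * gmpG k₁ k₂ m) (Set.Ioi 0) := by
  have hdom : IntegrableOn (fun x : ℝ => Real.exp (-x) * x ^ ((n:ℝ) + 1 - 1)) (Set.Ioi 0) :=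
    Real.GammaIntegral_convergent (by positivity)
  refine Integrable.mono' hdom ?_ ?_
  · exact (Continuous.aestronglyMeasurable (by unfold gmpG; continuity))
  · filter_upwards [ae_restrict_mem measurableSet_Ioi] with x hx
    have hx0 : (0:ℝ) < x := hx
    have h1 : gmpG k₁ k₂ x ≤ Real.exp (-x) := by
      unfold gmpG
      apply Real.exp_le_exp.2
      have : 0 ≤ (x - k₁) ^ 2 / (2 * k₂) := by positivity
      linarith
    rw [Real.norm_eq_abs, abs_of_nonneg (mul_nonneg (pow_nonneg hx0.le n) (gmpG_pos k₁ k₂ x).le)]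
    have h2 : x ^ ((n:ℝ) + 1 - 1) = x ^ n := by
      rw [add_sub_cancel_right, Real.rpow_natCast]
    rw [h2]
    calc x ^ n * gmpG k₁ k₂ x ≤ x ^ n * Real.exp (-x) := by
          exact mul_le_mul_of_nonneg_left h1 (by positivity)
      _ = Real.exp (-x) * x ^ n := by ring

lemma gmpA_nonneg (k₁ k₂ : ℝ) (n : ℕ) : 0 ≤ gmpA k₁ k₂ n := by
  apply setIntegral_nonneg measurableSet_Ioi
  intro x hx
  have := gmpG_pos k₁ k₂ x
  have : (0:ℝ) < x := hx
  positivity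

lemma gmpG_hasDerivAt (k₁ k₂ : ℝ) (hk₂ : 0 < k₂) (x : ℝ) :
    HasDerivAt (gmpG k₁ k₂) ((-1 - (x - k₁) / k₂) * gmpG k₁ k₂ x) x := by
  have h1 : HasDerivAt (fun m : ℝ => -m - (m - k₁) ^ 2 / (2 * k₂))
      (-1 - (x - k₁) / k₂) x := by
    have h2 : HasDerivAt (fun m : ℝ => (m - k₁) ^ 2) (2 * (x - k₁)) x := by
      simpa using ((hasDerivAt_id x).sub_const k₁).fun_pow 2
    have h3 := ((hasDerivAt_id x).fun_neg).fun_sub (h2.div_const (2 * k₂))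
    refine h3.congr_deriv ?_
    field_simp
  have h4 := h1.exp
  convert h4 using 1
  unfold gmpG
  ring
  unfold gmpG
  ring

lemma gmp_tendsto (k₁ k₂ : ℝ) (hk₂ : 0 < k₂) (n : ℕ) :
    Tendsto (fun m : ℝ => m ^ n * gmpG k₁ k₂ m) atTop (nhds 0) := by
  apply squeeze_zero' (g := fun m : ℝ => m ^ n * Real.exp (-m))
  · filter_upwards [Ioi_mem_atTop (0:ℝ)] with x hx
    exact mul_nonneg (pow_nonneg (le_of_lt hx) n) (gmpG_pos k₁ k₂ x).le
  · filter_upwards [Ioi_mem_atTop (0:ℝ)] with x hx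
    have h1 : gmpG k₁ k₂ x ≤ Real.exp (-x) := by
      unfold gmpG
      apply Real.exp_le_exp.2
      have h2 : 0 ≤ (x - k₁) ^ 2 / (2 * k₂) := by positivity
      linarith
    exact mul_le_mul_of_nonneg_left h1 (pow_nonneg (le_of_lt hx) n)
  · exact tendsto_pow_mul_exp_neg_atTop_nhds_zero n

lemma gmp_recursion (k₁ k₂ : ℝ) (hk₂ : 0 < k₂) (j : ℕ) :
    gmpA k₁ k₂ (j + 2) = (k₁ - k₂) * gmpA k₁ k₂ (j + 1) + k₂ * (j + 1) * gmpA k₁ k₂ j := by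
  set G := gmpG k₁ k₂ with hG
  set f : ℝ → ℝ := fun m => m ^ (j + 1) * G m with hf
  set f' : ℝ → ℝ := fun m => ((j:ℝ) + 1) * (m ^ j * G m) - (m ^ (j + 1) * G m)
      - (1 / k₂) * (m ^ (j + 2) * G m) + (k₁ / k₂) * (m ^ (j + 1) * G m) with hf'
  have hderiv : ∀ x ∈ Set.Ioi (0:ℝ), HasDerivAt f (f' x) x := by
    intro x _
    have h1 := (hasDerivAt_pow (j + 1) x).fun_mul (gmpG_hasDerivAt k₁ k₂ hk₂ x)
    refine h1.congr_deriv ?_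
    simp only [hf', hG]
    push_cast
    field_simp
    ring
  have hcont : ContinuousWithinAt f (Set.Ici 0) 0 := by
    apply Continuous.continuousWithinAt
    have : Continuous G := by unfold G; unfold gmpG; continuity
    exact (continuous_pow _).mul this
  have hint : IntegrableOn f' (Set.Ioi 0) := by
    apply (((((gmp_integrable k₁ k₂ hk₂ j).const_mul _).sub
      (gmp_integrable k₁ k₂ hk₂ (j+1))).sub
      ((gmp_integrable k₁ k₂ hk₂ (j+2)).const_mul _)).add
      ((gmp_integrable k₁ k₂ hk₂ (j+1)).const_mul _))
  have htend : Tendsto f atTop (nhds 0) := gmp_tendsto k₁ k₂ hk₂ (j + 1)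
  have key := integral_Ioi_of_hasDerivAt_of_tendsto hcont hderiv hint htend
  have hf0 : f 0 = 0 := by simp [hf]
  rw [hf0, sub_zero] at key
  have hsplit : ∫ x in Set.Ioi (0:ℝ), f' x
      = ((j:ℝ) + 1) * gmpA k₁ k₂ j - gmpA k₁ k₂ (j+1)
        - (1 / k₂) * gmpA k₁ k₂ (j+2) + (k₁ / k₂) * gmpA k₁ k₂ (j+1) := by
    simp only [hf']
    rw [integral_add, integral_sub, integral_sub, integral_const_mul, integral_const_mul,
      integral_const_mul]
    · rfl
    · exact (gmp_integrable k₁ k₂ hk₂ j).const_mul _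
    · exact gmp_integrable k₁ k₂ hk₂ (j+1)
    · exact ((gmp_integrable k₁ k₂ hk₂ j).const_mul _).sub (gmp_integrable k₁ k₂ hk₂ (j+1))
    · exact (gmp_integrable k₁ k₂ hk₂ (j+2)).const_mul _
    · exact (((gmp_integrable k₁ k₂ hk₂ j).const_mul _).sub
        (gmp_integrable k₁ k₂ hk₂ (j+1))).sub ((gmp_integrable k₁ k₂ hk₂ (j+2)).const_mul _)
    · exact (gmp_integrable k₁ k₂ hk₂ (j+1)).const_mul _
  rw [hsplit] at key
  have hk₂' : k₂ ≠ 0 := ne_of_gt hk₂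
  field_simp at key
  push_cast
  linarith

lemma gmp_cs (k₁ k₂ : ℝ) (hk₂ : 0 < k₂) (n : ℕ) :
    gmpA k₁ k₂ (n + 1) ^ 2 ≤ gmpA k₁ k₂ n * gmpA k₁ k₂ (n + 2) := by
  have h : ∀ t : ℝ, 0 ≤ gmpA k₁ k₂ (n + 2) * (t * t) + (2 * gmpA k₁ k₂ (n + 1)) * t
      + gmpA k₁ k₂ n := by
    intro t
    have heq : gmpA k₁ k₂ (n + 2) * (t * t) + (2 * gmpA k₁ k₂ (n + 1)) * t + gmpA k₁ k₂ n
        = ∫ m in Set.Ioi (0:ℝ),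
            ((t * t) * (m ^ (n + 2) * gmpG k₁ k₂ m) + (2 * t) * (m ^ (n + 1) * gmpG k₁ k₂ m)
              + m ^ n * gmpG k₁ k₂ m) := by
      rw [integral_add, integral_add, integral_const_mul, integral_const_mul]
      · unfold gmpA; ring
      · exact (gmp_integrable k₁ k₂ hk₂ (n+2)).const_mul _
      · exact (gmp_integrable k₁ k₂ hk₂ (n+1)).const_mul _
      · exact ((gmp_integrable k₁ k₂ hk₂ (n+2)).const_mul _).add
          ((gmp_integrable k₁ k₂ hk₂ (n+1)).const_mul _)
      · exact gmp_integrable k₁ k₂ hk₂ n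
    rw [heq]
    apply setIntegral_nonneg measurableSet_Ioi
    intro x hx
    have hx0 : (0:ℝ) < x := hx
    have hg := gmpG_pos k₁ k₂ x
    have key : (t * t) * (x ^ (n + 2) * gmpG k₁ k₂ x) + (2 * t) * (x ^ (n + 1) * gmpG k₁ k₂ x)
        + x ^ n * gmpG k₁ k₂ x = (x ^ n * gmpG k₁ k₂ x) * (t * x + 1) ^ 2 := by ring
    rw [key]
    positivity
  have hd := discrim_le_zero h
  rw [discrim] at hd
  nlinarith [hd]

/-- A Poisson mixture whose rate has a (truncated) normal density has a log-concave pmf. -/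
theorem gaussian_mixed_poisson_log_concave (k₁ k₂ : ℝ) (hk₂ : 0 < k₂) (Z : ℝ)
    (hZ : Z = ∫ m in Set.Ioi (0:ℝ), Real.exp (-(m - k₁) ^ 2 / (2 * k₂)))
    (p : ℕ → ℝ)
    (hp : ∀ k, p k = ∫ m in Set.Ioi (0:ℝ),
        Real.exp (-m) * m ^ k / (k.factorial : ℝ)
          * (Real.exp (-(m - k₁) ^ 2 / (2 * k₂)) / Z)) :
    ∀ k : ℕ, 1 ≤ k → p (k - 1) * p (k + 1) ≤ p k ^ 2 := by
  -- positivity of Z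
  have hZint : IntegrableOn (fun m : ℝ => Real.exp (-(m - k₁) ^ 2 / (2 * k₂))) (Set.Ioi 0) := by
    have hdom : IntegrableOn (fun x : ℝ => Real.exp (k₁ + k₂ / 2) * Real.exp (-1 * x))
        (Set.Ioi 0) := (exp_neg_integrableOn_Ioi 0 one_pos).const_mul _
    refine Integrable.mono' hdom (Continuous.aestronglyMeasurable (by continuity)) ?_
    filter_upwards [ae_restrict_mem measurableSet_Ioi] with x hx
    rw [Real.norm_eq_abs, abs_of_nonneg (Real.exp_pos _).le, ← Real.exp_add]
    apply Real.exp_le_exp.2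
    have hx0 : (0:ℝ) < x := hx
    have h1 : 0 ≤ (x - k₁ - k₂) ^ 2 / (2 * k₂) := by positivity
    have h2 : -(x - k₁) ^ 2 / (2 * k₂) = k₁ + k₂ / 2 + -1 * x - (x - k₁ - k₂) ^ 2 / (2 * k₂) := by
      field_simp
      ring
    linarith [h2.le]
  have hZpos : 0 < Z := by
    rw [hZ]
    rw [setIntegral_pos_iff_support_of_nonneg_ae]
    · have : Function.support (fun m : ℝ => Real.exp (-(m - k₁) ^ 2 / (2 * k₂))) = Set.univ := by
        ext x; simp [Function.support, (Real.exp_pos _).ne']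
      rw [this, Set.univ_inter]
      simp [Real.volume_Ioi]
    · filter_upwards with x using (Real.exp_pos _).le
    · exact hZint
  -- p in terms of gmpA
  have hpa : ∀ j : ℕ, p j = gmpA k₁ k₂ j * (1 / ((j.factorial : ℝ) * Z)) := by
    intro j
    rw [hp j]
    unfold gmpA
    rw [← integral_mul_const]
    apply setIntegral_congr_fun measurableSet_Ioi
    intro x _
    have hZ0 : Z ≠ 0 := ne_of_gt hZpos
    have hj : (j.factorial : ℝ) ≠ 0 := by positivity
    have hsplit : Real.exp (-x - (x - k₁) ^ 2 / (2 * k₂))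
        = Real.exp (-x) * Real.exp (-(x - k₁) ^ 2 / (2 * k₂)) := by
      rw [← Real.exp_add]; congr 1; ring
    dsimp only
    unfold gmpG
    rw [hsplit]
    field_simp
  intro k hk
  obtain ⟨n, rfl⟩ : ∃ n, k = n + 1 := ⟨k - 1, (Nat.succ_pred_eq_of_pos hk).symm⟩
  simp only [Nat.add_sub_cancel]
  rw [hpa, hpa, hpa]
  -- key inequality
  have hr1 := gmp_recursion k₁ k₂ hk₂ n
  have hr2 := gmp_recursion k₁ k₂ hk₂ (n + 1)
  have hcs := gmp_cs k₁ k₂ hk₂ (n + 1)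
  set a0 := gmpA k₁ k₂ n
  set a1 := gmpA k₁ k₂ (n + 1)
  set a2 := gmpA k₁ k₂ (n + 1 + 1)
  set a3 := gmpA k₁ k₂ (n + 1 + 2)
  have key : ((n:ℝ) + 1) * (a0 * a2) ≤ ((n:ℝ) + 2) * a1 ^ 2 := by
    have hid : a1 * a3 - a2 ^ 2 = k₂ * (((n:ℝ) + 2) * a1 ^ 2 - ((n:ℝ) + 1) * (a0 * a2)) := by
      rw [hr2, hr1]; push_cast; ring
    nlinarith [hcs, hk₂]
  -- factorial arithmetic
  have hz2 : (0:ℝ) < Z := hZpos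
  have hfn : (0:ℝ) < (Nat.factorial n : ℝ) := by positivity
  have hf1 : ((n + 1).factorial : ℝ) = ((n:ℝ) + 1) * (Nat.factorial n : ℝ) := by
    rw [Nat.factorial_succ]; push_cast; ring
  have hf2 : ((n + 1 + 1).factorial : ℝ) = ((n:ℝ) + 2) * ((n:ℝ) + 1) * (Nat.factorial n : ℝ) := by
    rw [Nat.factorial_succ, Nat.factorial_succ]; push_cast; ring
  rw [hf1, hf2]
  have ha0 : 0 ≤ a0 := gmpA_nonneg k₁ k₂ n
  have ha1 : 0 ≤ a1 := gmpA_nonneg k₁ k₂ (n + 1)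
  have ha2 : 0 ≤ a2 := gmpA_nonneg k₁ k₂ (n + 1 + 1)
  have hn0 : (0:ℝ) < (n:ℝ) + 1 := by positivity
  have hn2 : (0:ℝ) < (n:ℝ) + 2 := by positivity
  rw [mul_one_div, mul_one_div, mul_one_div, div_mul_div_comm, div_pow]
  rw [div_le_div_iff₀ (by positivity) (by positivity)]
  have final := mul_le_mul_of_nonneg_right key
    (le_of_lt (show (0:ℝ) < ((n:ℝ) + 1) * ((Nat.factorial n : ℝ) * Z) ^ 2 by positivity))
  nlinarith [final]
end

section
/- (Lemma 1, converse direction) Suppose P_e(ζ) = ½(1 - F₀(ζ) + F₁(ζ)) is quasiconvex in ζ with global minimum at ζ₀, where F_b is the CDF of the observation given B₀=b. Then the ML rule B̂₀(ζ) = argmax_b p_Y[ζ|B₀=b] coincides with the single-threshold rule: decide 0 for ζ < ζ₀ and decide 1 for ζ > ζ₀. -/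
/-- Lemma 1, converse direction: if the error probability P_e(ζ) = ½(1 - F₀(ζ) + F₁(ζ)) is
quasiconvex with global minimum at ζ₀, then the ML rule coincides with the single-threshold
rule with threshold ζ₀. -/
theorem quasiconvex_implies_ml_single_threshold
    (p0 p1 F0 F1 Pe : ℝ → ℝ) (ζ₀ : ℝ)
    (hF0 : ∀ ζ, HasDerivAt F0 (p0 ζ) ζ) (hF1 : ∀ ζ, HasDerivAt F1 (p1 ζ) ζ)
    (hPe : ∀ ζ, Pe ζ = (1 - F0 ζ + F1 ζ) / 2)
    (hdec : ∀ a b, a ≤ b → b ≤ ζ₀ → Pe b ≤ Pe a)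
    (hinc : ∀ a b, ζ₀ ≤ a → a ≤ b → Pe a ≤ Pe b)
    (hmin : ∀ ζ, Pe ζ₀ ≤ Pe ζ) :
    (∀ ζ, ζ < ζ₀ → p1 ζ ≤ p0 ζ) ∧ (∀ ζ, ζ₀ < ζ → p0 ζ ≤ p1 ζ) := by
  have hPefun : Pe = fun ζ => (1 - F0 ζ + F1 ζ) / 2 := funext hPe
  have hd : ∀ ζ, HasDerivAt Pe ((p1 ζ - p0 ζ) / 2) ζ := by
    intro ζ
    rw [hPefun]
    have : HasDerivAt (fun ζ => 1 - F0 ζ + F1 ζ) (p1 ζ - p0 ζ) ζ := by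
      have := ((hasDerivAt_const ζ (1:ℝ)).sub (hF0 ζ)).add (hF1 ζ)
      exact this.congr_deriv (by ring)
    simpa using this.div_const 2
  have slope_tendsto : ∀ ζ, Filter.Tendsto (slope Pe ζ) (nhdsWithin ζ (Set.Ioi ζ))
      (nhds ((p1 ζ - p0 ζ) / 2)) := by
    intro ζ
    exact ((hasDerivAt_iff_tendsto_slope.mp (hd ζ)).mono_left
      (nhdsWithin_mono ζ (by intro x hx; exact ne_of_gt hx)))
  constructor
  · intro ζ hζ
    have hle : (p1 ζ - p0 ζ) / 2 ≤ 0 := by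
      refine le_of_tendsto (slope_tendsto ζ) ?_
      filter_upwards [Ioc_mem_nhdsGT_of_mem ⟨le_refl ζ, hζ⟩] with y hy
      have hnum : Pe y - Pe ζ ≤ 0 := sub_nonpos.mpr (hdec ζ y hy.1.le hy.2)
      have : slope Pe ζ y = (Pe y - Pe ζ) / (y - ζ) := by
        simp [slope_def_field, div_eq_iff (sub_ne_zero.mpr (ne_of_gt hy.1))]
      rw [this]
      exact div_nonpos_of_nonpos_of_nonneg hnum (sub_nonneg.mpr hy.1.le)
    linarith
  · intro ζ hζ
    have hge : 0 ≤ (p1 ζ - p0 ζ) / 2 := by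
      refine ge_of_tendsto (slope_tendsto ζ) ?_
      filter_upwards [self_mem_nhdsWithin] with y hy
      have hy' : ζ < y := hy
      have hnum : 0 ≤ Pe y - Pe ζ := sub_nonneg.mpr (hinc ζ y hζ.le hy'.le)
      have : slope Pe ζ y = (Pe y - Pe ζ) / (y - ζ) := by
        simp [slope_def_field, div_eq_iff (sub_ne_zero.mpr (ne_of_gt hy'))]
      rw [this]
      exact div_nonneg hnum (sub_nonneg.mpr hy'.le)
    linarith
end
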